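/- arXiv:1909.13382 — 2 statements merged into one kernel-verified Lean document; each statement's English description precedes it below -/
import Mathlib

section
/- Let A be a unital C*-algebra and let p₁, ..., pₘ be mutually orthogonal projections in A summing to at most 1, with p_{m+1} := p₁. Suppose u ∈ A is a unitary with u* p_k u = p_{k+1} for 1 ≤ k ≤ m and u commutes with 1 − Σ p_k. Let v = Σ_{k=1}^m e^{2πik/m} p_k + (1 − Σ_{k=1}^m p_k). Then v is a unitary and ‖uv − vu‖ ≤ |e^{2πi/m} − 1| ≤ 2π/m. -/
open scoped Real

private lemma stmt3_aux (m : ℕ) [NeZero m] :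
    ‖Complex.exp (2 * π * Complex.I / m) - 1‖ ≤ 2 * π / m := by
  have hm : (0 : ℝ) < m := Nat.cast_pos.mpr (Nat.pos_of_ne_zero (NeZero.ne m))
  set θ : ℝ := 2 * π / m with hθ
  have hθ0 : 0 ≤ θ := by positivity
  have h1 : (2 * π * Complex.I / m) = (θ : ℝ) * Complex.I := by
    push_cast [hθ]; ring
  rw [h1]
  have hre : (Complex.exp (θ * Complex.I) - 1).re = Real.cos θ - 1 := by
    simp [Complex.exp_ofReal_mul_I_re]
  have him : (Complex.exp (θ * Complex.I) - 1).im = Real.sin θ := by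
    simp [Complex.exp_ofReal_mul_I_im]
  have hsq : ‖Complex.exp (θ * Complex.I) - 1‖ ^ 2 = 2 - 2 * Real.cos θ := by
    rw [Complex.sq_norm, Complex.normSq_apply, hre, him]
    nlinarith [Real.sin_sq_add_cos_sq θ]
  have hcos := Real.one_sub_sq_div_two_le_cos (x := θ)
  nlinarith [norm_nonneg (Complex.exp (θ * Complex.I) - 1)]

/-- Let `A` be a unital C*-algebra, `p 1, …, p m` mutually orthogonal
projections summing to at most `1`, cyclically permuted by a unitary `u`
(`u* (p k) u = p (k+1)` cyclically) which commutes with `1 - ∑ p k`.  Then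
`v = ∑ₖ e^{2πik/m} p k + (1 - ∑ p k)` is a unitary and
`‖uv - vu‖ ≤ |e^{2πi/m} - 1| ≤ 2π/m`. -/
theorem stmt3 {A : Type*} [CStarAlgebra A] [PartialOrder A] [StarOrderedRing A]
    (m : ℕ) [NeZero m] (p : Fin m → A)
    (hsa : ∀ k, IsSelfAdjoint (p k)) (hidem : ∀ k, p k * p k = p k)
    (horth : ∀ k l, k ≠ l → p k * p l = 0)
    (hsum : (∑ k, p k) ≤ 1)
    (u : unitary A)
    (hcyc : ∀ k : Fin m, star (u : A) * p k * (u : A) = p (k + 1))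
    (hcomm : Commute (u : A) (1 - ∑ k, p k))
    (v : A)
    (hv : v = (∑ k : Fin m, Complex.exp (2 * π * Complex.I * ((k : ℕ) + 1) / m) • p k)
        + (1 - ∑ k, p k)) :
    v ∈ unitary A ∧
      ‖(u : A) * v - v * (u : A)‖ ≤ ‖Complex.exp (2 * π * Complex.I / m) - 1‖ ∧
      ‖Complex.exp (2 * π * Complex.I / m) - 1‖ ≤ 2 * π / m := by
  have hm0 : 0 < m := Nat.pos_of_ne_zero (NeZero.ne m)
  have hmC : (m : ℂ) ≠ 0 := Nat.cast_ne_zero.mpr (NeZero.ne m)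
  set lam : Fin m → ℂ := fun k => Complex.exp (2 * π * Complex.I * ((k : ℕ) + 1) / m)
    with hlam
  set c : ℂ := Complex.exp (2 * π * Complex.I / m) with hc
  set P : A := ∑ k, p k with hP
  set w : A := ∑ k : Fin m, lam k • p k with hw
  have hvw : v = w + (1 - P) := hv
  have hc0 : c ≠ 0 := Complex.exp_ne_zero _
  -- |lam k| = 1 and |c| = 1
  have habs_lam : ∀ k, ‖lam k‖ = 1 := by
    intro k
    have : lam k = Complex.exp (((2 * π * ((k : ℕ) + 1) / m : ℝ)) * Complex.I) := by
      simp only [hlam]; congr 1; push_cast; ring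
    rw [this, Complex.norm_exp_ofReal_mul_I]
  have habs_c : ‖c‖ = 1 := by
    have : c = Complex.exp (((2 * π / m : ℝ)) * Complex.I) := by
      rw [hc]; congr 1; push_cast; ring
    rw [this, Complex.norm_exp_ofReal_mul_I]
  have hconj_lam : ∀ k, (starRingEnd ℂ) (lam k) * lam k = 1 := by
    intro k
    have := Complex.normSq_eq_norm_sq (lam k)
    rw [← Complex.normSq_eq_conj_mul_self]
    rw [this, habs_lam k]; norm_num
  have hlam_mul_conj : ∀ k, lam k * (starRingEnd ℂ) (lam k) = 1 := by
    intro k; rw [mul_comm]; exact hconj_lam k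
  -- cyclic relation lam (k+1) = c * lam k
  have hlamc : ∀ k : Fin m, lam (k + 1) = c * lam k := by
    intro k
    have hk : k.val < m := k.isLt
    simp only [hlam, hc]
    rw [← Complex.exp_add]
    set t : ℕ := (k.val + 1) / m with ht
    have hval : k.val + 1 = ((k + 1 : Fin m) : ℕ) + m * t := by
      have h1 : ((k + 1 : Fin m) : ℕ) = (k.val + 1) % m := by
        rw [Fin.val_add, Fin.val_one', Nat.add_mod, Nat.mod_mod_of_dvd _ dvd_rfl, ← Nat.add_mod]
      rw [h1, ht, Nat.mod_add_div]
    have hcast : ((k : ℕ) : ℂ) + 1 = (((k + 1 : Fin m) : ℕ) : ℂ) + m * t := by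
      exact_mod_cast congrArg (Nat.cast : ℕ → ℂ) hval
    have heq : 2 * (π : ℂ) * Complex.I / m + 2 * π * Complex.I * ((k : ℕ) + 1) / m
        = 2 * π * Complex.I * ((((k + 1 : Fin m) : ℕ) : ℂ) + 1) / m
          + (t : ℤ) * (2 * π * Complex.I) := by
      push_cast
      field_simp
      linear_combination hcast
    rw [heq, Complex.exp_add, Complex.exp_int_mul_two_pi_mul_I, mul_one]
  -- projection sum facts
  have hPmul : ∀ k, p k * P = p k := by
    intro k
    rw [hP, Finset.mul_sum]
    rw [Finset.sum_eq_single k (fun l _ hl => horth k l (Ne.symm hl))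
      (fun h => absurd (Finset.mem_univ k) h)]
    exact hidem k
  have hmulP : ∀ k, P * p k = p k := by
    intro k
    rw [hP, Finset.sum_mul]
    rw [Finset.sum_eq_single k (fun l _ hl => horth l k hl)
      (fun h => absurd (Finset.mem_univ k) h)]
    exact hidem k
  have hPP : P * P = P := by
    conv_lhs => rw [hP, Finset.sum_mul]
    conv_rhs => rw [hP]
    exact Finset.sum_congr rfl fun k _ => hPmul k
  have hPsa : star P = P := by
    rw [hP, star_sum]
    exact Finset.sum_congr rfl fun k _ => (hsa k).star_eq
  have hpq : ∀ k, p k * (1 - P) = 0 := by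
    intro k; rw [mul_sub, mul_one, hPmul, sub_self]
  have hqp : ∀ k, (1 - P) * p k = 0 := by
    intro k; rw [sub_mul, one_mul, hmulP, sub_self]
  have hqq : (1 - P) * (1 - P) = 1 - P := by
    have h : (1 - P) * (1 - P) = 1 - P - (P - P * P) := by noncomm_ring
    rw [h, hPP, sub_self, sub_zero]
  -- products of coefficient sums
  have hprod : ∀ a b : Fin m → ℂ,
      (∑ j, a j • p j) * (∑ k, b k • p k) = ∑ k, (a k * b k) • p k := by
    intro a b
    rw [Finset.sum_mul_sum]
    have h1 : ∀ j : Fin m, ∑ k, (a j • p j) * (b k • p k) = (a j * b j) • p j := by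
      intro j
      have h2 : ∀ k : Fin m, (a j • p j) * (b k • p k) = (a j * b k) • (p j * p k) := by
        intro k; rw [smul_mul_smul_comm]
      rw [Finset.sum_congr rfl fun k _ => h2 k]
      rw [Finset.sum_eq_single j (fun k _ hk => by rw [horth j k (Ne.symm hk), smul_zero])
        (fun h => absurd (Finset.mem_univ j) h), hidem]
    exact Finset.sum_congr rfl fun j _ => h1 j
  -- star w
  have hws : star w = ∑ k, (starRingEnd ℂ) (lam k) • p k := by
    rw [hw, star_sum]
    exact Finset.sum_congr rfl fun k _ => by
      rw [star_smul, (hsa k).star_eq, Complex.star_def]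
  have hwsw : star w * w = P := by
    rw [hws, hw, hprod, hP]
    exact Finset.sum_congr rfl fun k _ => by rw [hconj_lam k, one_smul]
  have hwws : w * star w = P := by
    rw [hws, hw, hprod, hP]
    exact Finset.sum_congr rfl fun k _ => by rw [hlam_mul_conj k, one_smul]
  have hwq : w * (1 - P) = 0 := by
    rw [hw, Finset.sum_mul]
    refine Finset.sum_eq_zero fun k _ => ?_
    rw [smul_mul_assoc, hpq, smul_zero]
  have hqw : (1 - P) * w = 0 := by
    rw [hw, Finset.mul_sum]
    refine Finset.sum_eq_zero fun k _ => ?_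
    rw [mul_smul_comm, hqp, smul_zero]
  have hwsq : star w * (1 - P) = 0 := by
    rw [hws, Finset.sum_mul]
    refine Finset.sum_eq_zero fun k _ => ?_
    rw [smul_mul_assoc, hpq, smul_zero]
  have hqws : (1 - P) * star w = 0 := by
    rw [hws, Finset.mul_sum]
    refine Finset.sum_eq_zero fun k _ => ?_
    rw [mul_smul_comm, hqp, smul_zero]
  -- v is unitary
  have hvs : star v = star w + (1 - P) := by
    rw [hvw, star_add, star_sub, star_one, hPsa]
  have hv1 : star v * v = 1 := by
    rw [hvs, hvw, add_mul, mul_add, mul_add, hwsw, hwsq, hqw, hqq]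
    abel
  have hv2 : v * star v = 1 := by
    rw [hvs, hvw, add_mul, mul_add, mul_add, hwws, hwq, hqws, hqq]
    abel
  have hvmem : v ∈ unitary A := Unitary.mem_iff.mpr ⟨hv1, hv2⟩
  -- unitary facts
  have hU1 : star (u : A) * (u : A) = 1 := Unitary.coe_star_mul_self u
  have hU2 : (u : A) * star (u : A) = 1 := Unitary.coe_mul_star_self u
  -- conjugation of q and w
  have hq_conj : star (u : A) * (1 - P) * (u : A) = 1 - P := by
    calc star (u : A) * (1 - P) * (u : A) = star (u : A) * ((1 - P) * (u : A)) := by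
          rw [mul_assoc]
      _ = star (u : A) * ((u : A) * (1 - P)) := by rw [← hcomm.eq]
      _ = star (u : A) * (u : A) * (1 - P) := by rw [mul_assoc]
      _ = 1 - P := by rw [hU1, one_mul]
  have hwu : star (u : A) * w * (u : A) = ∑ k, lam k • p (k + 1) := by
    rw [hw, Finset.mul_sum, Finset.sum_mul]
    exact Finset.sum_congr rfl fun k _ => by
      rw [mul_smul_comm, smul_mul_assoc, hcyc k]
  have hkey : c • (∑ k, lam k • p (k + 1)) = w := by
    rw [Finset.smul_sum]
    have h1 : ∀ k : Fin m, c • (lam k • p (k + 1)) = lam (k + 1) • p (k + 1) := by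
      intro k; rw [smul_smul, ← hlamc k]
    rw [Finset.sum_congr rfl fun k _ => h1 k, hw]
    exact Fintype.sum_equiv (Equiv.addRight (1 : Fin m)) _ _ (fun k => rfl)
  have hwu' : star (u : A) * w * (u : A) = c⁻¹ • w := by
    rw [hwu, ← hkey, smul_smul, inv_mul_cancel₀ hc0, one_smul]
  have hvu : star (u : A) * v * (u : A) = c⁻¹ • w + (1 - P) := by
    rw [hvw, mul_add, add_mul, hwu', hq_conj]
  have hdiff : v - star (u : A) * v * (u : A) = (1 - c⁻¹) • w := by
    rw [hvu, hvw, sub_smul, one_smul]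
    abel
  have hcomm2 : (u : A) * v - v * (u : A) = (u : A) * (v - star (u : A) * v * (u : A)) := by
    rw [mul_sub]
    congr 1
    rw [← mul_assoc, ← mul_assoc, hU2, one_mul]
  -- norm bounds
  have hnP : ‖P‖ ≤ 1 := by
    have h1 : ‖P‖ * ‖P‖ = ‖P‖ := by
      rw [← CStarRing.norm_star_mul_self, hPsa, hPP]
    nlinarith [norm_nonneg P]
  have hnw : ‖w‖ ≤ 1 := by
    have h1 : ‖w‖ * ‖w‖ = ‖P‖ := by rw [← CStarRing.norm_star_mul_self, hwsw]
    nlinarith [norm_nonneg w]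
  have habs_eq : ‖1 - c⁻¹‖ = ‖c - 1‖ := by
    have h1 : (1 : ℂ) - c⁻¹ = c⁻¹ * (c - 1) := by field_simp
    rw [h1, norm_mul, norm_inv, habs_c]
    norm_num
  have hnorm : ‖(u : A) * v - v * (u : A)‖ ≤ ‖c - 1‖ := by
    rw [hcomm2, hdiff, CStarRing.norm_coe_unitary_mul u, norm_smul]
    calc ‖(1 : ℂ) - c⁻¹‖ * ‖w‖ ≤ ‖(1 : ℂ) - c⁻¹‖ * 1 := by
          exact mul_le_mul_of_nonneg_left hnw (norm_nonneg _)
      _ = ‖c - 1‖ := by rw [mul_one, habs_eq]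
  -- the final numeric inequality
  have hfin : ‖c - 1‖ ≤ 2 * π / m := by rw [hc]; exact stmt3_aux m
  exact ⟨hvmem, hnorm, hfin⟩
end

section
/- Let C = A(F₁, F₂, φ₀, φ₁) = {(f,g) ∈ C([0,1],F₂) ⊕ F₁ : f(0) = φ₀(g), f(1) = φ₁(g)} be an Elliott–Thomsen building block (one-dimensional NCCW), where F₁ = ⊕_{i=1}^l M_{r(i)} and F₂ are finite-dimensional and φ₀, φ₁ : F₁ → F₂ are unital homomorphisms. Identify K₀(C) with a subgroup of K₀(F₁) ≅ Z^l via the evaluation-at-endpoint map. Suppose x ∈ K₀(C) corresponds to (x₁,...,x_l) ∈ Z^l and satisfies |x_s|/(r(s)·n) < ε for all s and some n ≥ 1. Let T = max_s |x_s|/r(s) and z = T·(r(1),...,r(l)). Then z ∈ K₀(C)₊, y := x + z ∈ K₀(C)₊, x = y − z, and every tracial state τ of C ⊗ M_n satisfies τ(q) < ε and τ(p) < 2ε for projections p, q over C ⊗ M_n with [p] = y, [q] = z. -/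
/-- For an Elliott–Thomsen building block `C = A(F₁,F₂,φ₀,φ₁)` with
`F₁ = ⊕ᵢ M_{r i}`, identify `K₀(C)` with a subgroup `G` of `ℤ^l` via evaluation at an
endpoint; the class of the unit corresponds to `(r 1, …, r l)` and the positive cone is
cut out by componentwise nonnegativity.  If `x ∈ G` satisfies `|x s|/(r s · n) < ε` for
all `s`, then with `T = max_s |x s|/r s` and `z = T·(r 1, …, r l)`, `y = x + z`, one has
`z, y` in the (rationalized) positive cone, `x = y - z`, and every tracial state of
`C ⊗ Mₙ` — inducing a positive additive state `t` on `K₀` normalized by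
`t(n·[1_C]) = 1` — satisfies `t z < ε` and `t y < 2ε`. -/
theorem stmt18 (l : ℕ) [NeZero l] (r : Fin l → ℕ) (hr : ∀ s, 1 ≤ r s)
    (G : AddSubgroup (Fin l → ℤ)) (hrG : (fun s => (r s : ℤ)) ∈ G)
    (n : ℕ) (hn : 1 ≤ n) (ε : ℚ) (hε : 0 < ε)
    (x : Fin l → ℤ) (hx : x ∈ G)
    (hsmall : ∀ s, |(x s : ℚ)| / (r s * n) < ε)
    (T : ℚ) (hT : T = Finset.univ.sup' Finset.univ_nonempty (fun s => |(x s : ℚ)| / r s))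
    (z y : Fin l → ℚ)
    (hz : z = fun s => T * r s) (hy : y = fun s => (x s : ℚ) + z s) :
    -- `z` and `y` lie in the (rationalized) positive cone of `K₀(C)`:
    (∀ s, 0 ≤ z s) ∧ (∀ s, 0 ≤ y s) ∧
    (∃ m : ℕ, 0 < m ∧ (fun s => (m : ℚ) * z s) ∈
        (fun g : Fin l → ℤ => fun s => ((g s : ℚ))) '' (G : Set (Fin l → ℤ))) ∧
    (∃ m : ℕ, 0 < m ∧ (fun s => (m : ℚ) * y s) ∈
        (fun g : Fin l → ℤ => fun s => ((g s : ℚ))) '' (G : Set (Fin l → ℤ))) ∧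
    -- `x = y - z`:
    (∀ s, (x s : ℚ) = y s - z s) ∧
    -- trace estimates for tracial states of `C ⊗ Mₙ`:
    (∀ t : (Fin l → ℚ) →ₗ[ℚ] ℚ,
      (∀ w : Fin l → ℚ, (∀ s, 0 ≤ w s) → 0 ≤ t w) →
      t (fun s => (n : ℚ) * r s) = 1 →
      t z < ε ∧ t y < 2 * ε) := by
  have hrpos : ∀ s, (0:ℚ) < (r s : ℚ) := fun s => by
    exact_mod_cast Nat.lt_of_lt_of_le Nat.zero_lt_one (hr s)
  have hnpos : (0:ℚ) < (n:ℚ) := by exact_mod_cast hn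
  -- T bounds
  have hTge : ∀ s, |(x s : ℚ)| / r s ≤ T := by
    intro s; rw [hT]
    exact Finset.le_sup' (fun s => |(x s : ℚ)| / r s) (Finset.mem_univ s)
  have hTabs : ∀ s, |(x s : ℚ)| ≤ T * r s := by
    intro s
    have := hTge s
    rw [div_le_iff₀ (hrpos s)] at this
    linarith
  have hTz : ∀ s, 0 ≤ z s := by
    intro s; rw [hz]
    have := (abs_nonneg ((x s : ℚ))).trans (hTabs s)
    simpa using this
  have hTy : ∀ s, 0 ≤ y s := by
    intro s; rw [hy]
    have h1 := hTabs s
    have h2 := neg_abs_le ((x s : ℚ))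
    have := hTz s
    rw [hz] at this ⊢
    simp only at this ⊢
    linarith
  -- s₀ achieving the sup
  obtain ⟨s₀, -, hs₀⟩ := Finset.exists_mem_eq_sup' (Finset.univ_nonempty (α := Fin l))
      (fun s => |(x s : ℚ)| / r s)
  have hTval : T = |(x s₀ : ℚ)| / r s₀ := by rw [hT, hs₀]
  have hTsmall : T / n < ε := by
    have := hsmall s₀
    rw [hTval, div_div]
    exact this
  have hTnonneg : 0 ≤ T := (abs_nonneg _).trans (hTabs s₀) |>.trans (le_of_eq rfl) |> fun _ =>
    le_trans (div_nonneg (abs_nonneg _) (hrpos s₀).le) hTval.ge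
  refine ⟨hTz, hTy, ?_, ?_, ?_, ?_⟩
  · refine ⟨r s₀, Nat.lt_of_lt_of_le Nat.zero_lt_one (hr s₀), ?_⟩
    refine ⟨|x s₀| • (fun s => (r s : ℤ)), AddSubgroup.zsmul_mem G hrG _, ?_⟩
    funext s
    simp only [Pi.smul_apply, smul_eq_mul, Int.cast_mul, Int.cast_abs]
    rw [hz]
    have : (r s₀ : ℚ) ≠ 0 := (hrpos s₀).ne'
    rw [hTval]
    push_cast
    field_simp
  · refine ⟨r s₀, Nat.lt_of_lt_of_le Nat.zero_lt_one (hr s₀), ?_⟩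
    refine ⟨(r s₀ : ℤ) • x + |x s₀| • (fun s => (r s : ℤ)),
      G.add_mem (AddSubgroup.zsmul_mem G hx _) (AddSubgroup.zsmul_mem G hrG _), ?_⟩
    funext s
    simp only [Pi.add_apply, Pi.smul_apply, smul_eq_mul, Int.cast_add, Int.cast_mul,
      Int.cast_abs, Int.cast_natCast]
    rw [hy, hz]
    have : (r s₀ : ℚ) ≠ 0 := (hrpos s₀).ne'
    rw [hTval]
    push_cast
    field_simp
  · intro s; rw [hy]; ring
  · intro t hpos hnorm
    -- t r = 1/n
    have hr1 : t (fun s => (r s : ℚ)) = 1 / n := by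
      have : t (fun s => (n : ℚ) * r s) = (n:ℚ) * t (fun s => (r s : ℚ)) := by
        have : (fun s => (n : ℚ) * r s) = (n:ℚ) • (fun s => (r s : ℚ)) := by
          funext s; simp [mul_comm]
        rw [this, map_smul, smul_eq_mul]
      rw [this] at hnorm
      field_simp
      linarith
    have htz : t z = T / n := by
      have : z = T • (fun s => (r s : ℚ)) := by
        funext s; rw [hz]; simp
      rw [this, map_smul, smul_eq_mul, hr1]
      ring
    constructor
    · rw [htz]; exact hTsmall
    · -- t y ≤ 2 T / n
      have hle : t y ≤ 2 * (T / n) := by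
        have h1 : 0 ≤ t ((fun s => 2 * T * r s) - y) := by
          apply hpos
          intro s
          simp only [Pi.sub_apply]
          have h2 := hTabs s
          have h3 := le_abs_self ((x s : ℚ))
          rw [hy, hz]; simp only; linarith
        rw [map_sub] at h1
        have h2 : t (fun s => 2 * T * r s) = 2 * (T / n) := by
          have : (fun s => 2 * T * r s) = (2 * T) • (fun s => (r s : ℚ)) := by
            funext s; simp
          rw [this, map_smul, smul_eq_mul, hr1]; ring
        linarith
      linarith [hTsmall]
end
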